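/- Fix η > 0 and define u : {(x,y) ∈ ℝ² : x ≥ 0, y ≥ 0, x + y > 0} → ℝ by u(x,y) = (x+y) ∫₀^∞ e^{-(x+y)γ/η}/(1+γ) dγ. Then the mixed second partial derivative ∂²u/∂x∂y exists and is strictly negative at every point with x + y > 0. -/

import Mathlib

open MeasureTheory Real Set Filter Topology

lemma stmt12_intOn {b : ℝ} (hb : 0 < b) (n m : ℕ) :
    IntegrableOn (fun γ : ℝ => γ ^ n * Real.exp (-b * γ) / (1 + γ) ^ m) (Set.Ioi 0) := by
  have base : IntegrableOn (fun γ : ℝ => γ ^ (n : ℝ) * Real.exp (-b * γ ^ (1 : ℝ))) (Set.Ioi 0) :=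
    integrableOn_rpow_mul_exp_neg_mul_rpow (neg_one_lt_zero.trans_le (Nat.cast_nonneg n)) one_pos hb
  have base' : IntegrableOn (fun γ : ℝ => γ ^ n * Real.exp (-b * γ)) (Set.Ioi 0) := by
    simpa [Real.rpow_natCast, Real.rpow_one] using base
  refine base'.mono' ?_ ?_
  · refine ContinuousOn.aestronglyMeasurable ?_ measurableSet_Ioi
    refine ContinuousOn.div (by fun_prop) (by fun_prop) ?_
    intro γ hγ
    have : (0:ℝ) < 1 + γ := by simp at hγ; linarith
    positivity
  · filter_upwards [ae_restrict_mem measurableSet_Ioi] with γ hγ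
    have h0 : (0:ℝ) < γ := hγ
    have h1 : (1:ℝ) ≤ (1 + γ) ^ m := one_le_pow₀ (by linarith)
    have hnum : (0:ℝ) ≤ γ ^ n * Real.exp (-b * γ) := by positivity
    rw [Real.norm_eq_abs, abs_of_nonneg (by positivity)]
    calc γ ^ n * Real.exp (-b * γ) / (1 + γ) ^ m
        ≤ γ ^ n * Real.exp (-b * γ) / 1 := by gcongr
      _ = γ ^ n * Real.exp (-b * γ) := by ring

lemma stmt12_meas {η : ℝ} (c : ℝ) (k m : ℕ) :
    AEStronglyMeasurable (fun γ : ℝ => γ ^ k * Real.exp (-c * γ / η) / (1 + γ) ^ m)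
      (volume.restrict (Set.Ioi 0)) := by
  refine ContinuousOn.aestronglyMeasurable
    (ContinuousOn.div (by fun_prop) (by fun_prop) ?_) measurableSet_Ioi
  intro γ hγ
  have : (0:ℝ) < 1 + γ := by simp at hγ; linarith
  positivity

lemma stmt12_Jint {η : ℝ} (hη : 0 < η) {b : ℝ} (hb : 0 < b) (n m : ℕ) :
    IntegrableOn (fun γ : ℝ => γ ^ n * Real.exp (-b * γ / η) / (1 + γ) ^ m) (Set.Ioi 0) := by
  refine (stmt12_intOn (div_pos hb hη) n m).congr_fun (fun γ _ => ?_) measurableSet_Ioi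
  dsimp only
  rw [show -(b/η) * γ = -b * γ / η by ring]

lemma stmt12_hasDerivAt_J {η : ℝ} (hη : 0 < η) (n : ℕ) {β : ℝ} (hβ : 0 < β) :
    HasDerivAt (fun b => ∫ γ in Set.Ioi (0:ℝ), γ ^ n * Real.exp (-b * γ / η) / (1 + γ))
      (-(1/η) * ∫ γ in Set.Ioi (0:ℝ), γ ^ (n+1) * Real.exp (-β * γ / η) / (1 + γ)) β := by
  have h_bound : ∀ᵐ γ ∂(volume.restrict (Set.Ioi (0:ℝ))), ∀ b ∈ Metric.ball β (β/2),
      ‖-(1/η) * (γ ^ (n+1) * Real.exp (-b * γ / η) / (1 + γ))‖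
        ≤ (1/η) * (γ ^ (n+1) * Real.exp (-(β/2) * γ / η)) := by
    filter_upwards [ae_restrict_mem measurableSet_Ioi] with γ hγ
    intro b hb
    have hγ0 : (0:ℝ) < γ := hγ
    have hb2 : β/2 ≤ b := by
      rw [Metric.mem_ball, Real.dist_eq, abs_sub_lt_iff] at hb
      linarith
    have hγ1 : (1:ℝ) ≤ 1 + γ := by linarith
    have hexp : Real.exp (-b * γ / η) ≤ Real.exp (-(β/2) * γ / η) := by
      apply Real.exp_le_exp.mpr
      have h1 : -b * γ ≤ -(β/2) * γ := by nlinarith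
      exact (div_le_div_iff_of_pos_right hη).mpr h1
    have hE : (0:ℝ) ≤ γ ^ (n+1) * Real.exp (-b * γ / η) / (1 + γ) := by positivity
    rw [Real.norm_eq_abs, abs_mul, abs_neg, abs_of_nonneg (le_of_lt (by positivity : (0:ℝ) < 1/η)),
      abs_of_nonneg hE]
    have step1 : γ ^ (n+1) * Real.exp (-b * γ / η) / (1 + γ)
        ≤ γ ^ (n+1) * Real.exp (-(β/2) * γ / η) / (1 + γ) := by gcongr
    have step2 : γ ^ (n+1) * Real.exp (-(β/2) * γ / η) / (1 + γ)
        ≤ γ ^ (n+1) * Real.exp (-(β/2) * γ / η) :=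
      div_le_self (by positivity) hγ1
    have := step1.trans step2
    gcongr
  have h_diff : ∀ᵐ γ ∂(volume.restrict (Set.Ioi (0:ℝ))), ∀ b ∈ Metric.ball β (β/2),
      HasDerivAt (fun b => γ ^ n * Real.exp (-b * γ / η) / (1 + γ))
        (-(1/η) * (γ ^ (n+1) * Real.exp (-b * γ / η) / (1 + γ))) b := by
    filter_upwards [ae_restrict_mem measurableSet_Ioi] with γ hγ
    intro b _
    have h1 : HasDerivAt (fun b : ℝ => -b * γ / η) (-1 * γ / η) b :=
      ((hasDerivAt_id b).neg.mul_const γ).div_const η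
    have h2 := (h1.exp.const_mul (γ ^ n)).div_const (1 + γ)
    convert h2 using 1
    · rfl
    · rfl
    ring
  obtain ⟨-, h⟩ := hasDerivAt_integral_of_dominated_loc_of_deriv_le (Metric.ball_mem_nhds β (half_pos hβ))
    (Filter.Eventually.of_forall fun b => by
      simpa [pow_one] using stmt12_meas (η := η) b n 1)
    (by simpa [pow_one, IntegrableOn] using stmt12_Jint hη hβ n 1)
    (by simpa [pow_one] using (stmt12_meas (η := η) β (n+1) 1).const_mul (-(1/η)))
    h_bound
    (by simpa [div_one] using (stmt12_Jint hη (half_pos hβ) (n+1) 0).const_mul (1/η))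
    h_diff
  rwa [MeasureTheory.integral_const_mul] at h

lemma stmt12_parts {η : ℝ} (hη : 0 < η) {β : ℝ} (hβ : 0 < β) :
    ∫ γ in Set.Ioi (0:ℝ), ((2*γ + γ^2) * Real.exp (-β*γ/η) / (1+γ)^2
      - β/η * (γ^2 * Real.exp (-β*γ/η) / (1+γ))) = 0 := by
  have hderiv : ∀ γ ∈ Set.Ici (0:ℝ),
      HasDerivAt (fun γ : ℝ => γ^2 * Real.exp (-β*γ/η) / (1+γ))
        ((2*γ + γ^2) * Real.exp (-β*γ/η) / (1+γ)^2
          - β/η * (γ^2 * Real.exp (-β*γ/η) / (1+γ))) γ := by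
    intro γ hγ
    have hγ0 : (0:ℝ) ≤ γ := hγ
    have hne : (1:ℝ) + γ ≠ 0 := by positivity
    have hexp : HasDerivAt (fun γ : ℝ => Real.exp (-β*γ/η))
        (Real.exp (-β*γ/η) * (-β * 1 / η)) γ :=
      (((hasDerivAt_id γ).const_mul (-β)).div_const η).exp
    have hnum := (hasDerivAt_pow 2 γ).mul hexp
    have h := hnum.div ((hasDerivAt_id γ).const_add 1) hne
    convert h using 1
    · rfl
    · rfl
    · funext γ
      simp [id]
    simp only [id, Pi.mul_apply]
    field_simp
    ring
  have f'int : IntegrableOn (fun γ : ℝ => (2*γ + γ^2) * Real.exp (-β*γ/η) / (1+γ)^2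
      - β/η * (γ^2 * Real.exp (-β*γ/η) / (1+γ))) (Set.Ioi 0) := by
    have h1 := ((stmt12_Jint hη hβ 1 2).const_mul 2).add (stmt12_Jint hη hβ 2 2)
    have h2 := (stmt12_Jint hη hβ 2 1).const_mul (β/η)
    refine MeasureTheory.IntegrableOn.congr_fun (h1.sub h2) (fun γ _ => ?_) measurableSet_Ioi
    simp only [Pi.add_apply, Pi.sub_apply, pow_one]
    ring
  have htend : Tendsto (fun γ : ℝ => γ^2 * Real.exp (-β*γ/η) / (1+γ)) atTop (𝓝 0) := by
    have hg := tendsto_rpow_mul_exp_neg_mul_atTop_nhds_zero 1 (β/η) (div_pos hβ hη)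
    refine squeeze_zero' ?_ ?_ hg
    · filter_upwards [Filter.eventually_ge_atTop (0:ℝ)] with γ hγ
      have : (0:ℝ) < 1 + γ := by linarith
      positivity
    · filter_upwards [Filter.eventually_ge_atTop (0:ℝ)] with γ hγ
      have h1 : (0:ℝ) < 1 + γ := by linarith
      rw [Real.rpow_one, show -(β/η) * γ = -β*γ/η by ring, div_le_iff₀ h1]
      nlinarith [Real.exp_pos (-β*γ/η), mul_nonneg hγ (Real.exp_pos (-β*γ/η)).le]
  have key := integral_Ioi_of_hasDerivAt_of_tendsto' hderiv f'int htend
  simpa using key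

lemma stmt12_ineq {η : ℝ} (hη : 0 < η) {β : ℝ} (hβ : 0 < β) :
    β/η * (∫ γ in Set.Ioi (0:ℝ), γ^2 * Real.exp (-β*γ/η) / (1+γ))
      < 2 * ∫ γ in Set.Ioi (0:ℝ), γ * Real.exp (-β*γ/η) / (1+γ) := by
  have hint1 : IntegrableOn (fun γ : ℝ => (2*γ + γ^2) * Real.exp (-β*γ/η) / (1+γ)^2)
      (Set.Ioi 0) := by
    refine MeasureTheory.IntegrableOn.congr_fun (((stmt12_Jint hη hβ 1 2).const_mul 2).add
      (stmt12_Jint hη hβ 2 2)) (fun γ _ => ?_) measurableSet_Ioi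
    simp only [Pi.add_apply, pow_one]; ring
  have hint2 : IntegrableOn (fun γ : ℝ => β/η * (γ^2 * Real.exp (-β*γ/η) / (1+γ)))
      (Set.Ioi 0) := by
    have := (stmt12_Jint hη hβ 2 1).const_mul (β/η)
    simpa [pow_one, IntegrableOn] using this
  have hint3 : IntegrableOn (fun γ : ℝ => 2 * (γ * Real.exp (-β*γ/η) / (1+γ)))
      (Set.Ioi 0) := by
    have := (stmt12_Jint hη hβ 1 1).const_mul 2
    simpa [pow_one, IntegrableOn] using this
  have hint4 : IntegrableOn (fun γ : ℝ => γ^2 * Real.exp (-β*γ/η) / (1+γ)^2)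
      (Set.Ioi 0) := stmt12_Jint hη hβ 2 2
  have hparts := stmt12_parts hη hβ
  rw [MeasureTheory.integral_sub hint1 hint2, MeasureTheory.integral_const_mul, sub_eq_zero] at hparts
  have h2A : (2:ℝ) * ∫ γ in Set.Ioi (0:ℝ), γ * Real.exp (-β*γ/η) / (1+γ)
      = ∫ γ in Set.Ioi (0:ℝ), 2 * (γ * Real.exp (-β*γ/η) / (1+γ)) :=
    (MeasureTheory.integral_const_mul 2 _).symm
  have hdiff : (∫ γ in Set.Ioi (0:ℝ), 2 * (γ * Real.exp (-β*γ/η) / (1+γ)))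
      - (∫ γ in Set.Ioi (0:ℝ), (2*γ + γ^2) * Real.exp (-β*γ/η) / (1+γ)^2)
      = ∫ γ in Set.Ioi (0:ℝ), γ^2 * Real.exp (-β*γ/η) / (1+γ)^2 := by
    rw [← MeasureTheory.integral_sub hint3 hint1]
    refine MeasureTheory.setIntegral_congr_fun measurableSet_Ioi (fun γ hγ => ?_)
    have hγ0 : (0:ℝ) < γ := hγ
    have hne : (1:ℝ) + γ ≠ 0 := by positivity
    field_simp
    ring
  have hpos : 0 < ∫ γ in Set.Ioi (0:ℝ), γ^2 * Real.exp (-β*γ/η) / (1+γ)^2 := by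
    rw [MeasureTheory.setIntegral_pos_iff_support_of_nonneg_ae ?_ hint4]
    · have hsub : Set.Ioi (0:ℝ) ⊆ Function.support
          (fun γ : ℝ => γ^2 * Real.exp (-β*γ/η) / (1+γ)^2) := by
        intro γ hγ
        have hγ0 : (0:ℝ) < γ := hγ
        exact ne_of_gt (by positivity)
      rw [Set.inter_eq_right.mpr hsub, Real.volume_Ioi]
      norm_num
    · filter_upwards [ae_restrict_mem measurableSet_Ioi] with γ hγ
      have hγ0 : (0:ℝ) < γ := hγ
      positivity
  rw [← hparts]
  linarith






theorem stmt_12 (η : ℝ) (hη : 0 < η) (u : ℝ → ℝ → ℝ)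
    (hu : ∀ x y : ℝ, u x y =
      (x + y) * ∫ γ in Set.Ioi (0 : ℝ), Real.exp (-(x + y) * γ / η) / (1 + γ)) :
    ∀ x y : ℝ, 0 ≤ x → 0 ≤ y → 0 < x + y →
      (∀ x' : ℝ, 0 ≤ x' → 0 < x' + y → DifferentiableAt ℝ (fun y' => u x' y') y) ∧
      ∃ d : ℝ, d < 0 ∧ HasDerivAt (fun x' => deriv (fun y' => u x' y') y) d x := by
  intro x y hx hy hxy
  have J0' : ∀ {b : ℝ}, 0 < b →
      HasDerivAt (fun b => ∫ γ in Set.Ioi (0:ℝ), Real.exp (-b*γ/η) / (1+γ))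
        (-(1/η) * ∫ γ in Set.Ioi (0:ℝ), γ * Real.exp (-b*γ/η) / (1+γ)) b := by
    intro b hb
    simpa using stmt12_hasDerivAt_J hη 0 hb
  have J1' : ∀ {b : ℝ}, 0 < b →
      HasDerivAt (fun b => ∫ γ in Set.Ioi (0:ℝ), γ * Real.exp (-b*γ/η) / (1+γ))
        (-(1/η) * ∫ γ in Set.Ioi (0:ℝ), γ^2 * Real.exp (-b*γ/η) / (1+γ)) b := by
    intro b hb
    simpa using stmt12_hasDerivAt_J hη 1 hb
  set G' : ℝ → ℝ := fun b => (∫ γ in Set.Ioi (0:ℝ), Real.exp (-b*γ/η) / (1+γ))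
      + b * (-(1/η) * ∫ γ in Set.Ioi (0:ℝ), γ * Real.exp (-b*γ/η) / (1+γ)) with hG'def
  have hG : ∀ {b : ℝ}, 0 < b →
      HasDerivAt (fun b => b * ∫ γ in Set.Ioi (0:ℝ), Real.exp (-b*γ/η) / (1+γ)) (G' b) b := by
    intro b hb
    have := (hasDerivAt_id b).mul (J0' hb)
    simpa [hG'def, one_mul, Pi.mul_def] using this
  have hu' : ∀ x', 0 < x' + y → HasDerivAt (fun y' => u x' y') (G' (x'+y)) y := by
    intro x' h
    have hcomp := (hG h).comp y ((hasDerivAt_id y).const_add x')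
    have heq : (fun y' => u x' y')
        = fun y' => (x'+y') * ∫ γ in Set.Ioi (0:ℝ), Real.exp (-(x'+y')*γ/η) / (1+γ) :=
      funext fun y' => hu x' y'
    have hcomp' : HasDerivAt (fun y' => (x'+y') * ∫ γ in Set.Ioi (0:ℝ),
        Real.exp (-(x'+y')*γ/η) / (1+γ)) (G' (x'+y) * 1) y := hcomp
    rw [mul_one] at hcomp'
    rw [heq]
    exact hcomp'
  refine ⟨fun x' _ h => (hu' x' h).differentiableAt, ?_⟩
  have hβ : 0 < x + y := hxy
  have hG'' : HasDerivAt G'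
      ((-(1/η) * ∫ γ in Set.Ioi (0:ℝ), γ * Real.exp (-(x+y)*γ/η) / (1+γ))
        + (1 * (-(1/η) * ∫ γ in Set.Ioi (0:ℝ), γ * Real.exp (-(x+y)*γ/η) / (1+γ))
          + (x+y) * (-(1/η) * (-(1/η) * ∫ γ in Set.Ioi (0:ℝ), γ^2 * Real.exp (-(x+y)*γ/η) / (1+γ)))))
      (x+y) :=
    (J0' hβ).add ((hasDerivAt_id (x+y)).mul ((J1' hβ).const_mul (-(1/η))))
  have hcomp2 := hG''.comp x ((hasDerivAt_id x).add_const y)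
  have hev : (fun x' => deriv (fun y' => u x' y') y) =ᶠ[nhds x] fun x' => G' (x'+y) := by
    have hopen : ∀ᶠ x' in nhds x, 0 < x' + y := by
      have hc : ContinuousAt (fun x' : ℝ => x' + y) x := by fun_prop
      exact continuousAt_const.eventually_lt hc (by simpa using hxy)
    filter_upwards [hopen] with x' h
    exact (hu' x' h).deriv
  have final := hcomp2.congr_of_eventuallyEq hev
  refine ⟨_, ?_, final⟩
  have hineq := stmt12_ineq hη hβ
  have key := mul_lt_mul_of_pos_right hineq (by positivity : (0:ℝ) < 1/η)
  ring_nf at key ⊢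
  linarith [key]
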